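/- For every real number x ≥ 1 and every nonnegative integer m, the sum ∑_{i=0}^{m} (m+1-i)(3i-m) x^i is nonnegative. -/

import Mathlib

lemma sum_id_real (n : ℕ) : ∑ i ∈ Finset.range n, (i : ℝ) = n * (n - 1) / 2 := by
  induction n with
  | zero => simp
  | succ k ih =>
    rw [Finset.sum_range_succ, ih]
    push_cast
    ring

lemma sum_sq_real (n : ℕ) :
    ∑ i ∈ Finset.range n, (i : ℝ) ^ 2 = n * (n - 1) * (2 * n - 1) / 6 := by
  induction n with
  | zero => simp
  | succ k ih =>
    rw [Finset.sum_range_succ, ih]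
    push_cast
    ring

lemma coeff_sum_zero (m : ℕ) :
    ∑ i ∈ Finset.range (m + 1), ((m : ℝ) + 1 - i) * (3 * i - m) = 0 := by
  have h : ∀ i ∈ Finset.range (m + 1),
      ((m : ℝ) + 1 - i) * (3 * i - m)
        = (4 * m + 3) * (i : ℝ) - 3 * (i : ℝ) ^ 2 - m * (m + 1) := by
    intro i _
    ring
  rw [Finset.sum_congr rfl h]
  simp only [Finset.sum_sub_distrib, Finset.sum_const, Finset.card_range, nsmul_eq_mul,
    ← Finset.mul_sum, sum_id_real, sum_sq_real]
  push_cast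
  ring

theorem stmt_0 (x : ℝ) (hx : 1 ≤ x) (m : ℕ) :
    0 ≤ ∑ i ∈ Finset.range (m + 1), ((m : ℝ) + 1 - i) * (3 * i - m) * x ^ i := by
  set i0 := (m + 2) / 3 with hi0
  have step : ∀ i ∈ Finset.range (m + 1),
      ((m : ℝ) + 1 - i) * (3 * i - m) * x ^ i0
        ≤ ((m : ℝ) + 1 - i) * (3 * i - m) * x ^ i := by
    intro i hi
    rw [Finset.mem_range] at hi
    have him : i ≤ m := Nat.lt_succ_iff.mp hi
    have himr : (i : ℝ) ≤ m := by exact_mod_cast him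
    rcases lt_or_ge i i0 with h | h
    · have h3 : 3 * i ≤ m := by omega
      have h3r : 3 * (i : ℝ) - m ≤ 0 := by
        have : (3 * i : ℝ) ≤ m := by exact_mod_cast h3
        linarith
      have hc : ((m : ℝ) + 1 - i) * (3 * i - m) ≤ 0 :=
        mul_nonpos_of_nonneg_of_nonpos (by linarith) h3r
      have hp : x ^ i ≤ x ^ i0 := pow_le_pow_right₀ hx h.le
      exact mul_le_mul_of_nonpos_left hp hc
    · have h3 : m ≤ 3 * i := by omega
      have h3r : (0 : ℝ) ≤ 3 * (i : ℝ) - m := by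
        have : (m : ℝ) ≤ 3 * i := by exact_mod_cast h3
        linarith
      have hc : 0 ≤ ((m : ℝ) + 1 - i) * (3 * i - m) :=
        mul_nonneg (by linarith) h3r
      have hp : x ^ i0 ≤ x ^ i := pow_le_pow_right₀ hx h
      exact mul_le_mul_of_nonneg_left hp hc
  calc (0 : ℝ)
      = (∑ i ∈ Finset.range (m + 1), ((m : ℝ) + 1 - i) * (3 * i - m)) * x ^ i0 := by
        rw [coeff_sum_zero]; ring
    _ = ∑ i ∈ Finset.range (m + 1), ((m : ℝ) + 1 - i) * (3 * i - m) * x ^ i0 := by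
        rw [Finset.sum_mul]
    _ ≤ ∑ i ∈ Finset.range (m + 1), ((m : ℝ) + 1 - i) * (3 * i - m) * x ^ i :=
        Finset.sum_le_sum step
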